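/- For κ ∈ I_n, define η(κ)(i) := ((n,κ(n))∘(n−1,κ(n−1))∘⋯∘(i,κ(i)))(i). Then for each i ∈ {1,…,n}, κ(i) = i if and only if η(κ)(i) = i; in particular the set {i : i < κ(i)} equals the set {i : i < η(κ)(i)}, so the coefficients α(κ) := ∏_{i : i<κ(i)} (n−2u−2+i)⁻¹ and α(η(κ)) coincide. -/

import Mathlib

/-!
STATEMENT 16: For κ ∈ I_n and η(κ)(i) := ((n,κ(n))∘⋯∘(i,κ(i)))(i):
κ(i) = i ↔ η(κ)(i) = i for each i; hence {i : i < κ(i)} = {i : i < η(κ)(i)}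
and α(κ) = α(η(κ)), where α(κ) = ∏_{i : i < κ(i)} (n−2u−2+i)⁻¹ in K = RatFunc ℚ.
The point `i : Fin n` carries the label `i+1 ∈ {1,…,n}`.
-/

noncomputable section

abbrev K : Type := RatFunc ℚ

def u : K := RatFunc.X

/-- q_κ^{[i]} = (n,κ(n))∘(n−1,κ(n−1))∘⋯∘(i,κ(i)), rightmost factor applied first. -/
def qk {n : ℕ} (κ : Fin n → Fin n) (i : Fin n) : Equiv.Perm (Fin n) :=
  ((((List.finRange n).filter (fun j => decide (i ≤ j))).reverse).map
    (fun j => Equiv.swap j (κ j))).prod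

/-- η(κ)(i) = ((n,κ(n))∘⋯∘(i,κ(i)))(i). -/
def etaMap {n : ℕ} (κ : Fin n → Fin n) : Fin n → Fin n :=
  fun i => qk κ i i

/-- α(κ) = ∏_{i : i < κ(i)} (n−2u−2+i)⁻¹, with label i+1. -/
def alphaK {n : ℕ} (κ : Fin n → Fin n) : K :=
  ∏ i ∈ Finset.univ.filter (fun i => i < κ i), ((n : K) - 2 * u - 2 + ((i : ℕ) + 1 : K))⁻¹

lemma prod_fix {n : ℕ} (κ : Fin n → Fin n) (hκ : ∀ i, i ≤ κ i)
    (l : List (Fin n)) (x : Fin n) (hl : ∀ j ∈ l, x < j) :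
    (l.map (fun j => Equiv.swap j (κ j))).prod x = x := by
  induction l with
  | nil => simp
  | cons a l ih =>
    simp only [List.map_cons, List.prod_cons, Equiv.Perm.mul_apply]
    rw [ih (fun j hj => hl j (List.mem_cons_of_mem _ hj))]
    have ha := hl a List.mem_cons_self
    exact Equiv.swap_apply_of_ne_of_ne (ne_of_lt ha)
      (ne_of_lt (lt_of_lt_of_le ha (hκ a)))

lemma filter_le_eq {n : ℕ} (i : Fin n) :
    (List.finRange n).filter (fun j => decide (i ≤ j)) =
      i :: (List.finRange n).filter (fun j => decide (i < j)) := by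
  have hs : List.Pairwise (· < ·) (List.finRange n) := List.pairwise_lt_finRange n
  haveI : IsAntisymm (Fin n) (· < ·) := ⟨fun a b h h' => absurd h' (asymm h)⟩
  refine (fun hp h1 h2 => List.Perm.eq_of_pairwise' (r := (· < ·)) h1 h2 hp) ?_ ?_ ?_
  · apply (List.perm_ext_iff_of_nodup ?_ ?_).mpr
    · intro x
      simp only [List.mem_filter, List.mem_finRange, true_and, List.mem_cons,
        decide_eq_true_eq, Fin.lt_def, Fin.le_def, Fin.ext_iff]
      omega
    · exact (List.nodup_finRange n).filter _
    · refine List.Nodup.cons ?_ ((List.nodup_finRange n).filter _)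
      intro h
      have := (List.mem_filter.mp h).2
      simp at this
  · exact hs.filter _
  · refine List.Pairwise.cons ?_ (hs.filter _)
    intro j hj
    have := (List.mem_filter.mp hj).2
    simpa using this

lemma main_aux {n : ℕ} (κ : Fin n → Fin n) (hκ : ∀ i, i ≤ κ i) (i : Fin n) :
    (κ i = i ↔ etaMap κ i = i) ∧ (i < κ i ↔ i < etaMap κ i) := by
  set L := ((List.finRange n).filter (fun j => decide (i < j))).reverse with hL
  set Q := (L.map (fun j => Equiv.swap j (κ j))).prod with hQ
  have hfix : ∀ x : Fin n, x ≤ i → Q x = x := by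
    intro x hx
    refine prod_fix κ hκ L x (fun j hj => lt_of_le_of_lt hx ?_)
    have := (List.mem_filter.mp (List.mem_reverse.mp hj)).2
    simpa using this
  have heta : etaMap κ i = Q (κ i) := by
    show qk κ i i = Q (κ i)
    unfold qk
    rw [filter_le_eq, List.reverse_cons, List.map_append, List.prod_append]
    simp [← hL, ← hQ, Equiv.swap_apply_left]
  by_cases h : κ i = i
  · have : etaMap κ i = i := by rw [heta, h, hfix i le_rfl]
    constructor
    · exact ⟨fun _ => this, fun _ => h⟩
    · simp [h, this]
  · have hlt : i < κ i := lt_of_le_of_ne (hκ i) (fun e => h e.symm)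
    have helt : i < etaMap κ i := by
      by_contra hc
      push_neg at hc
      have h1 : Q (etaMap κ i) = etaMap κ i := hfix _ hc
      rw [heta] at h1
      have := Q.injective h1
      rw [heta, this] at hc
      exact absurd hlt (not_lt.mpr hc)
    constructor
    · exact ⟨fun e => absurd e h, fun e => absurd e (ne_of_gt helt)⟩
    · simp [hlt, helt]

theorem etaMap_fixed_points (n : ℕ) (κ : Fin n → Fin n) (hκ : ∀ i, i ≤ κ i) :
    (∀ i, κ i = i ↔ etaMap κ i = i) ∧
    Finset.univ.filter (fun i => i < κ i) =
      Finset.univ.filter (fun i => i < etaMap κ i) ∧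
    alphaK κ = alphaK (etaMap κ) := by
  have h := main_aux κ hκ
  have hfil : Finset.univ.filter (fun i => i < κ i) =
      Finset.univ.filter (fun i => i < etaMap κ i) := by
    apply Finset.filter_congr
    intro i _
    simp [(h i).2]
  exact ⟨fun i => (h i).1, hfil, by unfold alphaK; rw [hfil]⟩

end
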